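/- arXiv:2005.01477 — 3 statements merged into one kernel-verified Lean document; each statement's English description precedes it below -/
import Mathlib

section
/- Let A be a skew-symmetric endomorphism of a 4-dimensional real inner product space with rank(A) = 2, and let η be a vector with Aη ≠ 0. Then A, viewed as the 2-form (X,Y) ↦ ⟨AX,Y⟩, equals (1/|Aη|²)·(Aη)^♭ ∧ (A²η)^♭. -/
open scoped RealInnerProductSpace

/-- A rank-two skew-symmetric endomorphism `A` of a 4-dimensional real inner product
space with `Aη ≠ 0`, viewed as the 2-form `(X,Y) ↦ ⟨AX,Y⟩`, equals
`(1/|Aη|²)·(Aη)^♭ ∧ (A²η)^♭`. -/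
theorem stmt2 {V : Type*} [NormedAddCommGroup V] [InnerProductSpace ℝ V]
    [FiniteDimensional ℝ V] (h4 : Module.finrank ℝ V = 4)
    (A : V →ₗ[ℝ] V) (hA : ∀ X Y : V, ⟪A X, Y⟫ = -⟪X, A Y⟫)
    (hrank : Module.finrank ℝ (LinearMap.range A) = 2)
    (η : V) (hη : A η ≠ 0) (X Y : V) :
    ⟪A X, Y⟫ =
      (1 / ‖A η‖^2) * (⟪A η, X⟫ * ⟪A (A η), Y⟫ - ⟪A η, Y⟫ * ⟪A (A η), X⟫) := by
  set e1 : V := A η with he1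
  set e2 : V := A (A η) with he2
  -- skewness gives ⟪A x, x⟫ = 0
  have skew0 : ∀ x : V, ⟪A x, x⟫ = 0 := by
    intro x
    have h := hA x x
    have h2 : ⟪x, A x⟫ = ⟪A x, x⟫ := real_inner_comm _ _
    linarith
  have h21 : ⟪e2, e1⟫ = 0 := skew0 (A η)
  have h12 : ⟪e1, e2⟫ = 0 := by rw [← h21]; exact real_inner_comm _ _
  have he2ne : e2 ≠ 0 := by
    intro h0
    apply hη
    have h1 : ⟪e1, e1⟫ = 0 := by
      have h := hA η (A η)
      rw [← he2, h0, inner_zero_right] at h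
      simpa [he1] using h
    exact inner_self_eq_zero.mp h1
  have hr : (0:ℝ) < ⟪e1, e1⟫ :=
    lt_of_le_of_ne real_inner_self_nonneg (Ne.symm (inner_self_ne_zero.mpr hη))
  have hs : (0:ℝ) < ⟪e2, e2⟫ :=
    lt_of_le_of_ne real_inner_self_nonneg (Ne.symm (inner_self_ne_zero.mpr he2ne))
  -- linear independence of e1, e2
  have hli : LinearIndependent ℝ ![e1, e2] := by
    rw [LinearIndependent.pair_iff]
    intro a b hab
    have hi1 : ⟪a • e1 + b • e2, e1⟫ = 0 := by rw [hab, inner_zero_left]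
    have hi2 : ⟪a • e1 + b • e2, e2⟫ = 0 := by rw [hab, inner_zero_left]
    rw [inner_add_left, real_inner_smul_left, real_inner_smul_left, h21] at hi1
    rw [inner_add_left, real_inner_smul_left, real_inner_smul_left, h12] at hi2
    constructor
    · have : a * ⟪e1, e1⟫ = 0 := by linarith
      exact (mul_eq_zero.mp this).resolve_right (ne_of_gt hr)
    · have : b * ⟪e2, e2⟫ = 0 := by linarith
      exact (mul_eq_zero.mp this).resolve_right (ne_of_gt hs)
  -- the span of e1, e2 is the range of A
  have hSeq : Submodule.span ℝ ({e1, e2} : Set V) = LinearMap.range A := by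
    have hle : Submodule.span ℝ ({e1, e2} : Set V) ≤ LinearMap.range A := by
      rw [Submodule.span_le]
      rintro x (rfl | rfl)
      · exact ⟨η, rfl⟩
      · exact ⟨A η, rfl⟩
    have hcard : Module.finrank ℝ (Submodule.span ℝ ({e1, e2} : Set V)) = 2 := by
      have h := finrank_span_eq_card hli
      have hset : Set.range ![e1, e2] = ({e1, e2} : Set V) := by
        ext x
        simp [Matrix.range_cons, Matrix.range_empty, or_comm]
      rw [hset] at h
      simpa using h
    exact Submodule.eq_of_le_of_finrank_le hle (by rw [hrank, hcard])
  have hmem : ∀ v : V, ∃ m n : ℝ, m • e1 + n • e2 = A v := by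
    intro v
    have : A v ∈ Submodule.span ℝ ({e1, e2} : Set V) := by
      rw [hSeq]; exact ⟨v, rfl⟩
    exact Submodule.mem_span_pair.mp this
  -- compute A e2
  obtain ⟨p, q, hpq⟩ := hmem e2
  have hq : q = 0 := by
    have h0 : ⟪A e2, e2⟫ = 0 := skew0 e2
    rw [← hpq, inner_add_left, real_inner_smul_left, real_inner_smul_left, h12] at h0
    have : q * ⟪e2, e2⟫ = 0 := by linarith
    exact (mul_eq_zero.mp this).resolve_right (ne_of_gt hs)
  have hp : p * ⟪e1, e1⟫ = -⟪e2, e2⟫ := by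
    have h0 : ⟪A e2, e1⟫ = -⟪e2, A e1⟫ := hA e2 e1
    have hAe1 : A e1 = e2 := rfl
    rw [hAe1] at h0
    rw [← hpq, inner_add_left, real_inner_smul_left, real_inner_smul_left, h21] at h0
    linarith
  -- decompose A X
  obtain ⟨m, n, hmn⟩ := hmem X
  have hm : m * ⟪e1, e1⟫ = -⟪e2, X⟫ := by
    have h0 : ⟪A X, e1⟫ = -⟪X, A e1⟫ := hA X e1
    have hAe1 : A e1 = e2 := rfl
    rw [hAe1] at h0
    rw [← hmn, inner_add_left, real_inner_smul_left, real_inner_smul_left, h21] at h0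
    have hc : ⟪X, e2⟫ = ⟪e2, X⟫ := real_inner_comm _ _
    linarith
  have hn : n * ⟪e1, e1⟫ = ⟪e1, X⟫ := by
    have h0 : ⟪A X, e2⟫ = -⟪X, A e2⟫ := hA X e2
    rw [← hpq, hq] at h0
    rw [← hmn, inner_add_left, real_inner_smul_left, real_inner_smul_left, h12] at h0
    simp only [zero_smul, add_zero, real_inner_smul_right] at h0
    -- h0 : m * 0 + n * ⟪e2, e2⟫ = -(p * ⟪X, e1⟫)
    have hc : ⟪X, e1⟫ = ⟪e1, X⟫ := real_inner_comm _ _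
    have key : ⟪e2, e2⟫ * (n * ⟪e1, e1⟫ - ⟪e1, X⟫) = 0 := by
      linear_combination ⟪e1, e1⟫ * h0 - ⟪X, e1⟫ * hp + ⟪e2, e2⟫ * hc
    have := (mul_eq_zero.mp key).resolve_left (ne_of_gt hs)
    linarith
  -- final computation
  have hnorm : ‖A η‖^2 = ⟪e1, e1⟫ := (real_inner_self_eq_norm_sq (A η)).symm
  rw [hnorm, ← hmn, inner_add_left, real_inner_smul_left, real_inner_smul_left]
  have hrne : ⟪e1, e1⟫ ≠ 0 := ne_of_gt hr
  field_simp
  linear_combination ⟪e1, Y⟫ * hm + ⟪e2, Y⟫ * hn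
end

section
/- Let A be a skew-symmetric endomorphism of rank two of a 4-dimensional real inner product space, and η a vector with Aη ≠ 0. Then A³η = −(|A²η|²/|Aη|²)·Aη. -/
open scoped RealInnerProductSpace

/-- For a rank-two skew-symmetric endomorphism `A` of a 4-dimensional real inner
product space and `η` with `Aη ≠ 0`, one has `A³η = -(|A²η|²/|Aη|²)·Aη`. -/
theorem stmt3 {V : Type*} [NormedAddCommGroup V] [InnerProductSpace ℝ V]
    [FiniteDimensional ℝ V] (h4 : Module.finrank ℝ V = 4)
    (A : V →ₗ[ℝ] V) (hA : ∀ X Y : V, ⟪A X, Y⟫ = -⟪X, A Y⟫)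
    (hrank : Module.finrank ℝ (LinearMap.range A) = 2)
    (η : V) (hη : A η ≠ 0) :
    A (A (A η)) = -(‖A (A η)‖^2 / ‖A η‖^2) • A η := by
  set u := A η with hu
  set v := A (A η) with hv
  have hvu : v = A u := rfl
  -- u ⊥ v
  have huv : ⟪u, v⟫ = 0 := by
    have h1 := hA (A η) (A η)
    have h2 := real_inner_comm v u
    rw [← hu, ← hv] at h1
    rw [hvu] at h2 ⊢
    linarith
  -- v ≠ 0
  have hv0 : v ≠ 0 := by
    intro h
    apply hη
    have : ⟪u, u⟫ = 0 := by
      have h1 := hA η u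
      rw [hvu] at h
      rw [h] at h1
      exact (by simpa using h1 : ⟪A η, u⟫ = 0)
    exact inner_self_eq_zero.mp this
  have huv' : ⟪v, u⟫ = 0 := by rw [real_inner_comm]; exact huv
  have hun : ⟪u, u⟫ ≠ 0 := inner_self_ne_zero.mpr hη
  have hvn : ⟪v, v⟫ ≠ 0 := inner_self_ne_zero.mpr hv0
  -- linear independence of u, v
  have hli : LinearIndependent ℝ ![u, v] := by
    rw [LinearIndependent.pair_iff]
    intro s t hst
    have h1 : ⟪u, s • u + t • v⟫ = 0 := by rw [hst]; simp
    have h2 : ⟪v, s • u + t • v⟫ = 0 := by rw [hst]; simp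
    rw [inner_add_right, real_inner_smul_right, real_inner_smul_right, huv] at h1
    rw [inner_add_right, real_inner_smul_right, real_inner_smul_right, huv'] at h2
    constructor
    · have := mul_eq_zero.mp (by linarith : s * ⟪u, u⟫ = 0)
      tauto
    · have := mul_eq_zero.mp (by linarith : t * ⟪v, v⟫ = 0)
      tauto
  -- span {u, v} = range A
  have hspan : Submodule.span ℝ {u, v} = LinearMap.range A := by
    apply Submodule.eq_of_le_of_finrank_le
    · rw [Submodule.span_le]
      rintro x (rfl | rfl)
      · exact ⟨η, rfl⟩
      · exact ⟨A η, rfl⟩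
    · rw [hrank]
      have := finrank_span_eq_card (R := ℝ) hli
      have hr : Set.range ![u, v] = {u, v} := by
        ext x
        simp only [Matrix.range_cons, Matrix.range_empty, Set.mem_insert_iff,
          Set.mem_singleton_iff, Set.union_empty, Set.mem_union]
      rw [hr] at this
      rw [this]
      simp
  -- A v ∈ span {u, v}
  have hmem : A v ∈ Submodule.span ℝ ({u, v} : Set V) := by
    rw [hspan]; exact ⟨v, rfl⟩
  obtain ⟨a, b, hab⟩ := Submodule.mem_span_pair.mp hmem
  -- ⟪A v, v⟫ = 0
  have hAvv : ⟪A v, v⟫ = 0 := by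
    have h1 := hA v v
    have h2 := real_inner_comm (A v) v
    linarith
  -- ⟪A v, u⟫ = -⟪v, v⟫
  have hAvu : ⟪A v, u⟫ = -⟪v, v⟫ := by
    have h1 := hA v u
    rw [← hvu] at h1
    exact h1
  -- compute b = 0
  have hb : b = 0 := by
    have h1 : ⟪a • u + b • v, v⟫ = 0 := by rw [hab]; exact hAvv
    rw [inner_add_left, real_inner_smul_left, real_inner_smul_left, huv] at h1
    have := mul_eq_zero.mp (by linarith : b * ⟪v, v⟫ = 0)
    tauto
  -- compute a
  have ha : a = -⟪v, v⟫ / ⟪u, u⟫ := by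
    have h1 : ⟪a • u + b • v, u⟫ = -⟪v, v⟫ := by rw [hab]; exact hAvu
    rw [inner_add_left, real_inner_smul_left, real_inner_smul_left, huv'] at h1
    field_simp
    linarith
  rw [← hab, hb, ha, real_inner_self_eq_norm_sq, real_inner_self_eq_norm_sq]
  simp [neg_div]
end

section
/- Let A be a skew-symmetric endomorphism of rank two of a finite-dimensional real inner product space. Then the squared Frobenius norm of A² equals half the square of the squared Frobenius norm of A, i.e. |A²|² = (|A|²)²/2, where |B|² = Σ_j |B e_j|² for any orthonormal basis (e_j). -/
open scoped RealInnerProductSpace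

/-- For a rank-two skew-symmetric endomorphism `A` of a finite-dimensional real inner
product space, the squared Frobenius norm of `A²` equals half the square of the squared
Frobenius norm of `A`: `|A²|² = (|A|²)²/2`, where `|B|² = ∑_j |B e_j|²` for any
orthonormal basis `(e_j)`. -/
theorem stmt4 {V : Type*} [NormedAddCommGroup V] [InnerProductSpace ℝ V]
    [FiniteDimensional ℝ V] {n : ℕ} (b : OrthonormalBasis (Fin n) ℝ V)
    (A : V →ₗ[ℝ] V) (hA : ∀ X Y : V, ⟪A X, Y⟫ = -⟪X, A Y⟫)
    (hrank : Module.finrank ℝ (LinearMap.range A) = 2) :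
    ∑ j : Fin n, ‖A (A (b j))‖^2 = (∑ j : Fin n, ‖A (b j)‖^2)^2 / 2 := by
  set W := LinearMap.range A with hW
  let e : OrthonormalBasis (Fin 2) ℝ W :=
    (stdOrthonormalBasis ℝ W).reindex (finCongr hrank)
  set u : V := (e 0 : V) with hu
  set v : V := (e 1 : V) with hv
  have hinner : ∀ i j : Fin 2, ⟪(e i : V), (e j : V)⟫ = if i = j then 1 else 0 := by
    intro i j
    rw [← Submodule.coe_inner]
    rw [orthonormal_iff_ite.mp e.orthonormal]
  have huu : ⟪u, u⟫ = 1 := by simpa using hinner 0 0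
  have hvv : ⟪v, v⟫ = 1 := by simpa using hinner 1 1
  have huv : ⟪u, v⟫ = 0 := by simpa using hinner 0 1
  have hvu : ⟪v, u⟫ = 0 := by simpa using hinner 1 0
  -- decomposition of A x
  have hdecomp : ∀ x : V, A x = ⟪u, A x⟫ • u + ⟪v, A x⟫ • v := by
    intro x
    have hmem : A x ∈ W := LinearMap.mem_range_self A x
    have := e.sum_repr' ⟨A x, hmem⟩
    have h2 := congrArg (Subtype.val : W → V) this
    simpa [Fin.sum_univ_two, Submodule.coe_inner, hu, hv] using h2.symm
  -- skewness consequences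
  have skew : ∀ x : V, ⟪x, A x⟫ = 0 := by
    intro x
    have h1 := hA x x
    have h2 : ⟪x, A x⟫ = ⟪A x, x⟫ := real_inner_comm _ _
    linarith [h1, h2]
  set β : ℝ := ⟪v, A u⟫ with hβ
  have hAu : A u = β • v := by
    have := hdecomp u
    rw [skew u] at this
    simpa using this
  have hAv : A v = -β • u := by
    have hd := hdecomp v
    rw [skew v] at hd
    have : ⟪u, A v⟫ = -β := by
      rw [real_inner_comm, hA, hβ]
    rw [this] at hd
    simpa using hd
  -- inner products of A x against u, v
  have hiu : ∀ x : V, ⟪u, A x⟫ = -β * ⟪v, x⟫ := by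
    intro x
    rw [real_inner_comm (A x) u, hA x u, hAu, real_inner_smul_right, real_inner_comm v x]
    ring
  have hiv : ∀ x : V, ⟪v, A x⟫ = β * ⟪u, x⟫ := by
    intro x
    rw [real_inner_comm (A x) v, hA x v, hAv, real_inner_smul_right, real_inner_comm u x]
    ring
  -- norm of a combination a • u + c • v
  have hnorm : ∀ a c : ℝ, ‖a • u + c • v‖^2 = a^2 + c^2 := by
    intro a c
    rw [← real_inner_self_eq_norm_sq]
    simp only [inner_add_add_self, real_inner_smul_left, real_inner_smul_right,
      huu, hvv, huv, hvu]
    ring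
  -- norms
  have hnAx : ∀ x : V, ‖A x‖^2 = β^2 * (⟪u, x⟫^2 + ⟪v, x⟫^2) := by
    intro x
    rw [hdecomp x, hnorm, hiu, hiv]
    ring
  have hnAAx : ∀ x : V, ‖A (A x)‖^2 = β^4 * (⟪u, x⟫^2 + ⟪v, x⟫^2) := by
    intro x
    rw [hdecomp (A x), hnorm, hiu (A x), hiv (A x), hiu x, hiv x]
    ring
  -- Parseval
  have parseval : ∀ w : V, ⟪w, w⟫ = 1 → ∑ j : Fin n, ⟪w, b j⟫^2 = 1 := by
    intro w hw
    have := b.sum_inner_mul_inner w w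
    rw [hw] at this
    rw [← this]
    refine Finset.sum_congr rfl fun j _ => ?_
    rw [sq, real_inner_comm w (b j)]
  have pu := parseval u huu
  have pv := parseval v hvv
  have h1 : ∑ j : Fin n, ‖A (b j)‖^2 = 2 * β^2 := by
    simp only [hnAx]
    rw [← Finset.mul_sum, Finset.sum_add_distrib]
    have hu' : ∑ j : Fin n, ⟪u, b j⟫^2 = 1 := pu
    rw [hu', pv]; ring
  have h2 : ∑ j : Fin n, ‖A (A (b j))‖^2 = 2 * β^4 := by
    simp only [hnAAx]
    rw [← Finset.mul_sum, Finset.sum_add_distrib, pu, pv]; ring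
  rw [h1, h2]; ring
end
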